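/- arXiv:1804.04024 — 2 statements merged into one kernel-verified Lean document; each statement's English description precedes it below -/
import Mathlib

section
/- Morley's theorem: In any triangle, the three points of intersection of adjacent angle trisectors form an equilateral triangle. Precisely, if triangle ABC has angles 3a, 3b, 3c with a + b + c = π/3, and P is the intersection of the trisectors of angles B and C nearest side BC (similarly Q for C, A and R for A, B), then PQR is equilateral. -/
open EuclideanGeometry Real

noncomputable instance : Module.Oriented ℝ (EuclideanSpace ℝ (Fin 2)) (Fin 2) :=
  ⟨(EuclideanSpace.basisFun (Fin 2) ℝ).toBasis.orientation⟩

instance : Fact (Module.finrank ℝ (EuclideanSpace ℝ (Fin 2)) = 2) :=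
  ⟨finrank_euclideanSpace_fin⟩

/-- Law of sines. -/
lemma morley_law_sin (p1 p2 p3 : EuclideanSpace ℝ (Fin 2)) (h : p1 ≠ p2) :
    dist p2 p3 * Real.sin (∠ p1 p2 p3) = dist p1 p3 * Real.sin (∠ p2 p1 p3) := by
  have h1 := EuclideanGeometry.law_cos p2 p1 p3
  have h2 := EuclideanGeometry.law_cos p1 p2 p3
  rw [dist_comm p2 p1, dist_comm p3 p1] at h1
  rw [dist_comm p3 p2] at h2
  have hc : dist p1 p2 ≠ 0 := dist_ne_zero.2 h
  set a := dist p2 p3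
  set b := dist p1 p3
  set c := dist p1 p2
  set x := Real.cos (∠ p2 p1 p3)
  set y := Real.cos (∠ p1 p2 p3)
  set sA := Real.sin (∠ p2 p1 p3) with hsA
  set sB := Real.sin (∠ p1 p2 p3) with hsB
  have pa : sA ^ 2 + x ^ 2 = 1 := Real.sin_sq_add_cos_sq _
  have pb : sB ^ 2 + y ^ 2 = 1 := Real.sin_sq_add_cos_sq _
  have hproj : c - b * x - a * y = 0 := by
    have h0 : c * (c - b * x - a * y) = 0 := by linear_combination (h1 + h2) * (-1/2)
    rcases mul_eq_zero.1 h0 with h' | h'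
    · exact absurd h' hc
    · exact h'
  have key : (a * sB) ^ 2 = (b * sA) ^ 2 := by
    linear_combination (-(b^2)) * pa + a^2 * pb + (1/2) * h1 - (1/2) * h2 +
      (a*y - b*x) * hproj
  have ha : 0 ≤ a * sB := mul_nonneg dist_nonneg
    (Real.sin_nonneg_of_nonneg_of_le_pi (angle_nonneg _ _ _) (angle_le_pi _ _ _))
  have hb : 0 ≤ b * sA := mul_nonneg dist_nonneg
    (Real.sin_nonneg_of_nonneg_of_le_pi (angle_nonneg _ _ _) (angle_le_pi _ _ _))
  calc a * sB = Real.sqrt ((a*sB)^2) := (Real.sqrt_sq ha).symm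
  _ = Real.sqrt ((b*sA)^2) := by rw [key]
  _ = b * sA := Real.sqrt_sq hb

lemma morley_sin_three (t : ℝ) :
    Real.sin (3 * t) = 4 * Real.sin t * Real.sin (π/3 + t) * Real.sin (π/3 - t) := by
  rw [Real.sin_three_mul, Real.sin_add, Real.sin_sub, Real.sin_pi_div_three,
    Real.cos_pi_div_three]
  have h3 : Real.sqrt 3 ^ 2 = 3 := Real.sq_sqrt (by norm_num)
  have pt := Real.sin_sq_add_cos_sq t
  linear_combination (-(3*Real.sin t)) * pt + (-(Real.sin t * Real.cos t ^ 2)) * h3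

lemma morley_tri_identity {x y z : ℝ} (h : x + y + z = π) :
    Real.sin x ^ 2 + Real.sin y ^ 2 - 2 * Real.sin x * Real.sin y * Real.cos z
      = Real.sin z ^ 2 := by
  rw [show z = π - (x + y) by linarith, Real.cos_pi_sub, Real.sin_pi_sub, Real.sin_add,
    Real.cos_add]
  have px := Real.sin_sq_add_cos_sq x
  have py := Real.sin_sq_add_cos_sq y
  linear_combination (-(Real.sin x ^ 2)) * py + (-(Real.sin y ^ 2)) * px

/-- Adjacent trisectors at a vertex make an angle `t` with each other. -/
lemma morley_trisect_angle (v w₁ w₂ p₁ p₂ : EuclideanSpace ℝ (Fin 2)) (t : ℝ)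
    (ht : 0 < t) (ht3 : 3 * t < π)
    (hncol : ¬ Collinear ℝ ({w₁, v, w₂} : Set (EuclideanSpace ℝ (Fin 2))))
    (hvw : ∠ w₁ v w₂ = 3 * t) (h₁ : ∠ p₁ v w₁ = t) (h₂ : ∠ p₂ v w₂ = t)
    (hs₁ : (affineSpan ℝ {v, w₁}).SSameSide p₁ w₂)
    (hs₂ : (affineSpan ℝ {v, w₂}).SSameSide p₂ w₁) :
    ∠ p₁ v p₂ = t := by
  have hw₁v : w₁ ≠ v := by
    rintro rfl
    exact hncol (by rw [Set.insert_idem]; exact collinear_pair ℝ w₁ w₂)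
  have hw₂v : w₂ ≠ v := by
    rintro rfl
    apply hncol
    have : ({w₁, w₂, w₂} : Set (EuclideanSpace ℝ (Fin 2))) = {w₁, w₂} := by simp
    rw [this]
    exact collinear_pair ℝ w₁ w₂
  have hp₁v : p₁ ≠ v := fun h => hs₁.2.1 (h ▸ left_mem_affineSpan_pair ℝ v w₁)
  have hp₂v : p₂ ≠ v := fun h => hs₂.2.1 (h ▸ left_mem_affineSpan_pair ℝ v w₂)
  have hsign0 : (∡ w₁ v w₂).sign ≠ 0 := by
    rw [Ne, oangle_sign_eq_zero_iff_collinear]; exact hncol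
  have hsgn₁ : (∡ w₁ v p₁).sign = (∡ w₁ v w₂).sign := by
    have e := hs₁.oangle_sign_eq (left_mem_affineSpan_pair ℝ v w₁)
      (right_mem_affineSpan_pair ℝ v w₁)
    -- e : (∡ v w₂ w₁).sign = (∡ v p₁ w₁).sign
    have r1 := oangle_rotate_sign v p₁ w₁
    have r2 := oangle_rotate_sign p₁ w₁ v
    have r3 := oangle_rotate_sign w₁ v w₂
    exact (r2.trans r1).trans (e.symm.trans r3)
  have hsgn₂ : (∡ w₂ v p₂).sign = -(∡ w₁ v w₂).sign := by
    have e := hs₂.oangle_sign_eq (left_mem_affineSpan_pair ℝ v w₂)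
      (right_mem_affineSpan_pair ℝ v w₂)
    -- e : (∡ v w₁ w₂).sign = (∡ v p₂ w₂).sign
    have r1 := oangle_rotate_sign v p₂ w₂
    have r2 := oangle_rotate_sign p₂ w₂ v
    have r3 := oangle_rotate_sign w₂ v w₁
    have h4 : (∡ w₂ v w₁).sign = -(∡ w₁ v w₂).sign := by
      rw [oangle_rev w₁ v w₂, Real.Angle.sign_neg]
    exact (r2.trans r1).trans (e.symm.trans (r3.trans h4))
  have hadd : ∡ p₁ v w₁ + ∡ w₁ v w₂ + ∡ w₂ v p₂ = ∡ p₁ v p₂ := by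
    rw [oangle_add hp₁v hw₁v hw₂v, oangle_add hp₁v hw₂v hp₂v]
  have habs : ∀ θ : ℝ, θ = t ∨ θ = -t → (∡ p₁ v p₂ = (θ : Real.Angle)) → ∠ p₁ v p₂ = t := by
    intro θ hθ hang
    rw [angle_eq_abs_oangle_toReal hp₁v hp₂v, hang,
      Real.Angle.toReal_coe_eq_self_iff.2 ?_]
    · rcases hθ with rfl | rfl
      · exact abs_of_pos ht
      · rw [abs_neg]; exact abs_of_pos ht
    · rcases hθ with rfl | rfl
      · exact ⟨by nlinarith [Real.pi_pos], by nlinarith⟩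
      · exact ⟨by nlinarith, by nlinarith [Real.pi_pos]⟩
  rcases hc : (∡ w₁ v w₂).sign with _ | _ | _
  · -- zero
    exact absurd hc hsign0
  · -- neg : sign = -1
    have e1 : ∡ w₁ v w₂ = ((-(3*t) : ℝ) : Real.Angle) := by
      rw [oangle_eq_neg_angle_of_sign_eq_neg_one hc, hvw, Real.Angle.coe_neg]
    have e2 : ∡ w₁ v p₁ = ((-t : ℝ) : Real.Angle) := by
      rw [oangle_eq_neg_angle_of_sign_eq_neg_one (by rw [hsgn₁, hc]; rfl), angle_comm, h₁,
        Real.Angle.coe_neg]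
    have e3 : ∡ w₂ v p₂ = ((t : ℝ) : Real.Angle) := by
      rw [oangle_eq_angle_of_sign_eq_one (by rw [hsgn₂, hc]; rfl), angle_comm, h₂]
    apply habs (-t) (Or.inr rfl)
    rw [← hadd, oangle_rev w₁ v p₁, e2, e1, e3, Real.Angle.coe_neg, neg_neg,
      ← Real.Angle.coe_add, ← Real.Angle.coe_add]
    congr 1
    ring
  · -- pos : sign = 1
    have e1 : ∡ w₁ v w₂ = ((3*t : ℝ) : Real.Angle) := by
      rw [oangle_eq_angle_of_sign_eq_one hc, hvw]
    have e2 : ∡ w₁ v p₁ = ((t : ℝ) : Real.Angle) := by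
      rw [oangle_eq_angle_of_sign_eq_one (by rw [hsgn₁, hc]; rfl), angle_comm, h₁]
    have e3 : ∡ w₂ v p₂ = ((-t : ℝ) : Real.Angle) := by
      rw [oangle_eq_neg_angle_of_sign_eq_neg_one (by rw [hsgn₂, hc]; rfl), angle_comm, h₂,
        Real.Angle.coe_neg]
    apply habs t (Or.inl rfl)
    rw [← hadd, oangle_rev w₁ v p₁, e2, e1, e3, ← Real.Angle.coe_neg,
      ← Real.Angle.coe_add, ← Real.Angle.coe_add]
    congr 1
    ring

set_option maxHeartbeats 1000000 in
theorem morley (A B C P Q R : EuclideanSpace ℝ (Fin 2))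
    (hABC : AffineIndependent ℝ ![A, B, C])
    (a b c : ℝ) (ha : 0 < a) (hb : 0 < b) (hc : 0 < c)
    (habc : a + b + c = Real.pi / 3)
    (hA : ∠ B A C = 3 * a) (hB : ∠ C B A = 3 * b) (hC : ∠ A C B = 3 * c)
    (hP₁ : ∠ P B C = b) (hP₂ : ∠ P C B = c)
    (hPside : AffineSubspace.SSameSide (affineSpan ℝ {B, C}) P A)
    (hQ₁ : ∠ Q C A = c) (hQ₂ : ∠ Q A C = a)
    (hQside : AffineSubspace.SSameSide (affineSpan ℝ {C, A}) Q B)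
    (hR₁ : ∠ R A B = a) (hR₂ : ∠ R B A = b)
    (hRside : AffineSubspace.SSameSide (affineSpan ℝ {A, B}) R C) :
    dist P Q = dist Q R ∧ dist Q R = dist R P := by
  -- Nondegeneracy
  have hncol : ¬ Collinear ℝ ({A, B, C} : Set (EuclideanSpace ℝ (Fin 2))) :=
    affineIndependent_iff_not_collinear_set.1 hABC
  have hAB : A ≠ B := by
    rintro rfl
    exact hncol (by rw [Set.insert_idem]; exact collinear_pair ℝ A C)
  have hBC : B ≠ C := by
    rintro rfl
    apply hncol
    have : ({A, B, B} : Set (EuclideanSpace ℝ (Fin 2))) = {A, B} := by simp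
    rw [this]; exact collinear_pair ℝ A B
  have hset1 : ({C, B, A} : Set (EuclideanSpace ℝ (Fin 2))) = {A, B, C} := by
    ext x; simp only [Set.mem_insert_iff, Set.mem_singleton_iff]; tauto
  have hset2 : ({B, C, A} : Set (EuclideanSpace ℝ (Fin 2))) = {A, B, C} := by
    ext x; simp only [Set.mem_insert_iff, Set.mem_singleton_iff]; tauto
  have hset3 : ({B, A, C} : Set (EuclideanSpace ℝ (Fin 2))) = {A, B, C} := by
    ext x; simp only [Set.mem_insert_iff, Set.mem_singleton_iff]; tauto
  have hncolCBA : ¬ Collinear ℝ ({C, B, A} : Set (EuclideanSpace ℝ (Fin 2))) := by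
    rw [hset1]; exact hncol
  have hncolBCA : ¬ Collinear ℝ ({B, C, A} : Set (EuclideanSpace ℝ (Fin 2))) := by
    rw [hset2]; exact hncol
  have hncolBAC : ¬ Collinear ℝ ({B, A, C} : Set (EuclideanSpace ℝ (Fin 2))) := by
    rw [hset3]; exact hncol
  -- distinctness of trisector points from vertices
  have hBP : B ≠ P := fun h => hPside.2.1 (by rw [← h]; exact left_mem_affineSpan_pair ℝ B C)
  have hCP : C ≠ P := fun h => hPside.2.1 (by rw [← h]; exact right_mem_affineSpan_pair ℝ B C)
  have hAR : A ≠ R := fun h => hRside.2.1 (by rw [← h]; exact left_mem_affineSpan_pair ℝ A B)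
  have hBR : B ≠ R := fun h => hRside.2.1 (by rw [← h]; exact right_mem_affineSpan_pair ℝ A B)
  have hCQ : C ≠ Q := fun h => hQside.2.1 (by rw [← h]; exact left_mem_affineSpan_pair ℝ C A)
  have hAQ : A ≠ Q := fun h => hQside.2.1 (by rw [← h]; exact right_mem_affineSpan_pair ℝ C A)
  -- positivity facts
  have hpi := Real.pi_pos
  have hs3a : 0 < Real.sin (3 * a) := Real.sin_pos_of_pos_of_lt_pi (by linarith) (by linarith)
  have hs3b : 0 < Real.sin (3 * b) := Real.sin_pos_of_pos_of_lt_pi (by linarith) (by linarith)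
  have hsa : 0 < Real.sin a := Real.sin_pos_of_pos_of_lt_pi ha (by linarith)
  have hsb : 0 < Real.sin b := Real.sin_pos_of_pos_of_lt_pi hb (by linarith)
  have hsc : 0 < Real.sin c := Real.sin_pos_of_pos_of_lt_pi hc (by linarith)
  have hsbc : 0 < Real.sin (b + c) := Real.sin_pos_of_pos_of_lt_pi (by linarith) (by linarith)
  have hsab : 0 < Real.sin (a + b) := Real.sin_pos_of_pos_of_lt_pi (by linarith) (by linarith)
  have hsca : 0 < Real.sin (c + a) := Real.sin_pos_of_pos_of_lt_pi (by linarith) (by linarith)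
  -- angle sums in the three small triangles
  have hCPB : ∠ C P B = π - (b + c) := by
    have h := EuclideanGeometry.angle_add_angle_add_angle_eq_pi C hBP
    rw [hP₁, angle_comm B C P, hP₂] at h
    linarith
  have hBRA : ∠ B R A = π - (a + b) := by
    have h := EuclideanGeometry.angle_add_angle_add_angle_eq_pi B hAR
    rw [hR₁, angle_comm A B R, hR₂] at h
    linarith
  have hAQC : ∠ A Q C = π - (c + a) := by
    have h := EuclideanGeometry.angle_add_angle_add_angle_eq_pi A hCQ
    rw [hQ₁, angle_comm C A Q, hQ₂] at h
    linarith
  -- law of sines in the small triangles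
  have LP1 := morley_law_sin C P B hCP
  rw [hCPB, hP₂, dist_comm P B, dist_comm C B, Real.sin_pi_sub] at LP1
  have LP2 := morley_law_sin B P C hBP
  rw [angle_comm B P C, hCPB, hP₁, dist_comm P C, Real.sin_pi_sub] at LP2
  have LR1 := morley_law_sin A R B hAR
  rw [angle_comm A R B, hBRA, hR₁, dist_comm R B, Real.sin_pi_sub] at LR1
  have LR2 := morley_law_sin B R A hBR
  rw [hBRA, hR₂, dist_comm R A, dist_comm B A, Real.sin_pi_sub] at LR2
  have LQ1 := morley_law_sin C Q A hCQ
  rw [angle_comm C Q A, hAQC, hQ₁, dist_comm Q A, Real.sin_pi_sub] at LQ1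
  have LQ2 := morley_law_sin A Q C hAQ
  rw [hAQC, hQ₂, dist_comm Q C, dist_comm A C, Real.sin_pi_sub] at LQ2
  -- law of sines in the big triangle
  have LM1 := morley_law_sin A B C hAB
  rw [angle_comm A B C, hB, hA, dist_comm A C] at LM1
  have LM2 := morley_law_sin B C A hBC
  rw [angle_comm B C A, hC, hB, dist_comm B A] at LM2
  -- the common scale
  set u : ℝ := dist B C / Real.sin (3 * a) with hu
  have hdBC : dist B C = u * Real.sin (3 * a) := by
    rw [hu]; field_simp
  have hdCA : dist C A = u * Real.sin (3 * b) := by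
    apply mul_right_cancel₀ (ne_of_gt hs3a)
    rw [← LM1, hdBC]; ring
  have hdAB : dist A B = u * Real.sin (3 * c) := by
    apply mul_right_cancel₀ (ne_of_gt hs3b)
    rw [← LM2, hdCA]; ring
  -- the six trisector segment lengths
  have hBPval : dist B P = 4 * u * Real.sin a * Real.sin c * Real.sin (π/3 + a) := by
    apply mul_right_cancel₀ (ne_of_gt hsbc)
    rw [LP1, hdBC, morley_sin_three a, show π/3 - a = b + c by linarith]; ring
  have hCPval : dist C P = 4 * u * Real.sin a * Real.sin b * Real.sin (π/3 + a) := by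
    apply mul_right_cancel₀ (ne_of_gt hsbc)
    rw [LP2, hdBC, morley_sin_three a, show π/3 - a = b + c by linarith]; ring
  have hBRval : dist B R = 4 * u * Real.sin a * Real.sin c * Real.sin (π/3 + c) := by
    apply mul_right_cancel₀ (ne_of_gt hsab)
    rw [LR1, hdAB, morley_sin_three c, show π/3 - c = a + b by linarith]; ring
  have hARval : dist A R = 4 * u * Real.sin b * Real.sin c * Real.sin (π/3 + c) := by
    apply mul_right_cancel₀ (ne_of_gt hsab)
    rw [LR2, hdAB, morley_sin_three c, show π/3 - c = a + b by linarith]; ring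
  have hAQval : dist A Q = 4 * u * Real.sin b * Real.sin c * Real.sin (π/3 + b) := by
    apply mul_right_cancel₀ (ne_of_gt hsca)
    rw [LQ1, hdCA, morley_sin_three b, show π/3 - b = c + a by linarith]; ring
  have hCQval : dist C Q = 4 * u * Real.sin a * Real.sin b * Real.sin (π/3 + b) := by
    apply mul_right_cancel₀ (ne_of_gt hsca)
    rw [LQ2, hdCA, morley_sin_three b, show π/3 - b = c + a by linarith]; ring
  -- angles between adjacent trisectors at each vertex
  have hPside' : (affineSpan ℝ {C, B}).SSameSide P A := by
    rwa [Set.pair_comm B C] at hPside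
  have hQside' : (affineSpan ℝ {A, C}).SSameSide Q B := by
    rwa [Set.pair_comm C A] at hQside
  have hRside' : (affineSpan ℝ {B, A}).SSameSide R C := by
    rwa [Set.pair_comm A B] at hRside
  have hPBR : ∠ P B R = b :=
    morley_trisect_angle B C A P R b hb (by linarith) hncolCBA hB hP₁ hR₂ hPside hRside'
  have hPCQ : ∠ P C Q = c :=
    morley_trisect_angle C B A P Q c hc (by linarith) hncolBCA
      (by rw [angle_comm]; exact hC) hP₂ hQ₁ hPside' hQside
  have hRAQ : ∠ R A Q = a :=
    morley_trisect_angle A B C R Q a ha (by linarith) hncolBAC hA hR₁ hQ₂ hRside hQside'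
  -- law of cosines at each vertex
  set E : ℝ := (4 * u * Real.sin a * Real.sin b * Real.sin c) ^ 2 with hE
  have hid₁ := morley_tri_identity (x := π/3 + a) (y := π/3 + c) (z := b) (by linarith)
  have hlc₁ := EuclideanGeometry.law_cos P B R
  rw [dist_comm P B, dist_comm R B, hBPval, hBRval, hPBR] at hlc₁
  have hPR2 : dist P R ^ 2 = E := by
    rw [hE]
    linear_combination hlc₁ + (4 * u * Real.sin a * Real.sin c)^2 * hid₁
  have hid₂ := morley_tri_identity (x := π/3 + a) (y := π/3 + b) (z := c) (by linarith)
  have hlc₂ := EuclideanGeometry.law_cos P C Q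
  rw [dist_comm P C, dist_comm Q C, hCPval, hCQval, hPCQ] at hlc₂
  have hPQ2 : dist P Q ^ 2 = E := by
    rw [hE]
    linear_combination hlc₂ + (4 * u * Real.sin a * Real.sin b)^2 * hid₂
  have hid₃ := morley_tri_identity (x := π/3 + c) (y := π/3 + b) (z := a) (by linarith)
  have hlc₃ := EuclideanGeometry.law_cos R A Q
  rw [dist_comm R A, dist_comm Q A, hARval, hAQval, hRAQ] at hlc₃
  have hQR2 : dist Q R ^ 2 = E := by
    rw [dist_comm Q R, hE]
    linear_combination hlc₃ + (4 * u * Real.sin b * Real.sin c)^2 * hid₃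
  constructor
  · calc dist P Q = Real.sqrt (dist P Q ^ 2) := (Real.sqrt_sq dist_nonneg).symm
    _ = Real.sqrt (dist Q R ^ 2) := by rw [hPQ2, hQR2]
    _ = dist Q R := Real.sqrt_sq dist_nonneg
  · calc dist Q R = Real.sqrt (dist Q R ^ 2) := (Real.sqrt_sq dist_nonneg).symm
    _ = Real.sqrt (dist R P ^ 2) := by rw [hQR2, dist_comm R P, hPR2]
    _ = dist R P := Real.sqrt_sq dist_nonneg
end

section
/- Suppose c_1, …, c_n are positive reals with c_1 + ⋯ + c_n = 2π, and a_1, …, a_n, b_1, …, b_n are positive reals such that the multiset of a's equals the multiset of b's, and each triple (a_i, b_i, c_i) satisfies a_i + b_i + c_i = π. Then the closed composition of spiral similarities ρ_1 ∘ ⋯ ∘ ρ_n is the identity, where ρ_i is rotation by c_i about the origin composed with scaling by sin(a_i)/sin(b_i). -/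
theorem ez_holonomy_spiral (n : ℕ) (a b c : Fin n → ℝ)
    (hapos : ∀ i, 0 < a i) (hbpos : ∀ i, 0 < b i) (hcpos : ∀ i, 0 < c i)
    (hcsum : ∑ i, c i = 2 * Real.pi)
    (hperm : (Finset.univ.val.map a) = (Finset.univ.val.map b))
    (htri : ∀ i, a i + b i + c i = Real.pi) :
    ∏ i, ((Real.sin (a i) / Real.sin (b i) : ℂ) * Complex.exp (Complex.I * c i)) = 1 := by
  have hsa : ∏ i, Real.sin (a i) = ∏ i, Real.sin (b i) := by
    rw [Finset.prod_eq_multiset_prod, Finset.prod_eq_multiset_prod]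
    have : (Finset.univ.val.map a).map Real.sin = (Finset.univ.val.map b).map Real.sin := by
      rw [hperm]
    simpa [Multiset.map_map, Function.comp_def] using congrArg Multiset.prod this
  have hbne : ∀ i, Real.sin (b i) ≠ 0 := by
    intro i
    have hlt : b i < Real.pi := by
      have := htri i; have := hapos i; have := hcpos i; linarith
    exact ne_of_gt (Real.sin_pos_of_pos_of_lt_pi (hbpos i) hlt)
  have h1 : ∏ i, ((Real.sin (a i) / Real.sin (b i) : ℝ) : ℂ) = 1 := by
    rw [← Complex.ofReal_prod]
    norm_cast
    rw [Finset.prod_div_distrib, hsa, div_self]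
    exact Finset.prod_ne_zero_iff.2 fun i _ => hbne i
  have h2 : ∏ i, Complex.exp (Complex.I * c i) = 1 := by
    rw [← Complex.exp_sum]
    have : ∑ i, Complex.I * (c i : ℂ) = Complex.I * (2 * Real.pi) := by
      rw [← Finset.mul_sum]
      rw [← Complex.ofReal_sum, hcsum]; push_cast; ring
    rw [this]
    have : Complex.I * (2 * Real.pi) = 2 * Real.pi * Complex.I := by ring
    rw [this, Complex.exp_two_pi_mul_I]
  calc ∏ i, ((Real.sin (a i) / Real.sin (b i) : ℂ) * Complex.exp (Complex.I * c i))
      = (∏ i, ((Real.sin (a i) / Real.sin (b i) : ℝ) : ℂ)) *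
        ∏ i, Complex.exp (Complex.I * c i) := by
        rw [← Finset.prod_mul_distrib]; norm_cast
    _ = 1 := by rw [h1, h2, one_mul]
end
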